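/- arXiv:math-ph/0105017 — 3 statements merged into one kernel-verified Lean document; each statement's English description precedes it below -/
import Mathlib

section
/- Let k > 0 and n = k + 3/2. If Q(f) = C f^{1+1/k} for all f ≥ 0 with some constant C > 0, then there is a constant C' > 0 such that Φ(ρ) = C' ρ^{1+1/n} for all ρ ≥ 0. -/
open MeasureTheory Real Filter Topology Pointwise
set_option maxHeartbeats 1000000

noncomputable section

abbrev Space : Type := EuclideanSpace ℝ (Fin 3)
abbrev Phase : Type := Space × Space

/-- Spatial density induced by a phase-space density. -/
def rho (f : Phase → ℝ) : Space → ℝ := fun x => ∫ v : Space, f (x, v)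

/-- Induced gravitational potential `U_ρ = -ρ ∗ 1/|·|`. -/
def Upot (ρ : Space → ℝ) : Space → ℝ := fun x => - ∫ y : Space, ρ y / ‖x - y‖

/-- Kinetic energy. -/
def Ekin (f : Phase → ℝ) : ℝ := (1/2) * ∫ p : Phase, ‖p.2‖^2 * f p

/-- Casimir functional. -/
def Cas (Q : ℝ → ℝ) (f : Phase → ℝ) : ℝ := ∫ p : Phase, Q (f p)

/-- Potential energy. -/
def Epot (ρ : Space → ℝ) : ℝ :=
  -(1/2) * ∫ x : Space, ∫ y : Space, ρ x * ρ y / ‖x - y‖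

/-- Energy-Casimir functional. -/
def HC (Q : ℝ → ℝ) (f : Phase → ℝ) : ℝ := Cas Q f + Ekin f + Epot (rho f)

/-- The constraint set `F_M`. -/
def FM (Q : ℝ → ℝ) (M : ℝ) : Set (Phase → ℝ) :=
  {f | (∀ p, 0 ≤ f p) ∧ Integrable f ∧
       Integrable (fun p : Phase => Q (f p) + (1/2) * ‖p.2‖^2 * f p) ∧
       MemLp (rho f) (ENNReal.ofReal (6/5)) ∧
       (∫ p : Phase, f p) = M}

/-- `∫ ((1/2)|v|² g(v) + Q(g(v))) dv`. -/
def kinQint (Q : ℝ → ℝ) (g : Space → ℝ) : ℝ :=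
  ∫ v : Space, ((1/2) * ‖v‖^2 * g v + Q (g v))

/-- The set `G_r`. -/
def Gset (Q : ℝ → ℝ) (r : ℝ) : Set (Space → ℝ) :=
  {g | (∀ v, 0 ≤ g v) ∧ Integrable g ∧
       Integrable (fun v => (1/2) * ‖v‖^2 * g v + Q (g v)) ∧
       (∫ v : Space, g v) = r}

/-- The reduced integrand `Φ(r) = inf_{g ∈ G_r} ∫ ((1/2)|v|² g + Q(g))`. -/
def Phi (Q : ℝ → ℝ) (r : ℝ) : ℝ := sInf (kinQint Q '' Gset Q r)

/-- The reduced energy-Casimir functional. -/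
def HCr (Q : ℝ → ℝ) (ρ : Space → ℝ) : ℝ := (∫ x : Space, Phi Q (ρ x)) + Epot ρ

/-- Assumptions on `Q`: `Q ∈ C¹([0,∞))` with derivative `Q'`, strictly convex,
`Q(0) = Q'(0) = 0`, and `Q(f)/f → ∞` as `f → ∞`. -/
structure QHyp (Q Q' : ℝ → ℝ) : Prop where
  hasDeriv : ∀ r ∈ Set.Ici (0:ℝ), HasDerivWithinAt Q (Q' r) (Set.Ici 0) r
  contDeriv : ContinuousOn Q' (Set.Ici 0)
  strictConvex : StrictConvexOn ℝ (Set.Ici 0) Q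
  zero : Q 0 = 0
  derivZero : Q' 0 = 0
  superlinear : Tendsto (fun f => Q f / f) atTop atTop

section helpers

variable {Q : ℝ → ℝ} {k C : ℝ}

/-- scaling map -/
def Sc (a : ℝ) (k : ℝ) (g : Space → ℝ) : Space → ℝ := fun v => a ^ (-(2*k)) * g (a • v)

lemma Qnn (hC : 0 < C) (hQeq : ∀ f : ℝ, 0 ≤ f → Q f = C * f ^ (1 + 1/k))
    {x : ℝ} (hx : 0 ≤ x) : 0 ≤ Q x := by
  rw [hQeq x hx]; positivity

lemma kinQint_nonneg (hC : 0 < C) (hQeq : ∀ f : ℝ, 0 ≤ f → Q f = C * f ^ (1 + 1/k))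
    {g : Space → ℝ} (hg0 : ∀ v, 0 ≤ g v) : 0 ≤ kinQint Q g := by
  refine integral_nonneg fun v => ?_
  show (0:ℝ) ≤ (1/2) * ‖v‖^2 * g v + Q (g v)
  have h1 := Qnn hC hQeq (hg0 v)
  have h2 : (0:ℝ) ≤ (1/2) * ‖v‖^2 * g v := by
    have := hg0 v; positivity
  linarith

lemma finrank_space : Module.finrank ℝ Space = 3 := finrank_euclideanSpace_fin

lemma Sc_mem (hk : 0 < k) (hC : 0 < C)
    (hQeq : ∀ f : ℝ, 0 ≤ f → Q f = C * f ^ (1 + 1/k))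
    {a m : ℝ} (ha : 0 < a) {g : Space → ℝ} (hg : g ∈ Gset Q m) :
    Sc a k g ∈ Gset Q (a ^ (-(2*k+3)) * m) ∧
      kinQint Q (Sc a k g) = a ^ (-(2*k+5)) * kinQint Q g := by
  obtain ⟨hg0, hgint, hgE, hgm⟩ := hg
  have ha0 : a ≠ 0 := ne_of_gt ha
  have hb : (0:ℝ) < a ^ (-(2*k)) := Real.rpow_pos_of_pos ha _
  have hbp : (a ^ (-(2*k))) ^ (1 + 1/k) = a ^ (-(2*k+2)) := by
    rw [← Real.rpow_mul ha.le]
    congr 1; field_simp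
  have ha2 : a ^ (-(2*k+2)) * a ^ (2:ℕ) = a ^ (-(2*k)) := by
    rw [← Real.rpow_natCast a 2, ← Real.rpow_add ha]
    norm_num
  have h3 : ((a ^ (3:ℕ) : ℝ))⁻¹ = a ^ (-(3:ℝ)) := by
    rw [← Real.rpow_natCast a 3, ← Real.rpow_neg ha.le]; norm_num
  have key : ∀ v : Space, (1/2)*‖v‖^2 * (Sc a k g v) + Q (Sc a k g v)
      = a ^ (-(2*k+2)) * ((1/2)*‖a • v‖^2 * g (a • v) + Q (g (a • v))) := by
    intro v
    have hnorm : ‖a • v‖ = a * ‖v‖ := by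
      rw [norm_smul, Real.norm_eq_abs, abs_of_pos ha]
    have hgv := hg0 (a • v)
    simp only [Sc]
    rw [hQeq _ (mul_nonneg hb.le hgv), hQeq _ hgv, Real.mul_rpow hb.le hgv, hbp, hnorm,
      ← ha2]
    ring
  have hgcomp : Integrable fun v : Space => g (a • v) :=
    (integrable_comp_smul_iff volume g ha0).2 hgint
  have hSint : Integrable (Sc a k g) := hgcomp.const_mul _
  have hEcomp : Integrable fun v : Space =>
      ((1/2)*‖a • v‖^2 * g (a • v) + Q (g (a • v))) :=
    (integrable_comp_smul_iff volume
      (fun u => (1/2)*‖u‖^2 * g u + Q (g u)) ha0).2 hgE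
  have hSE : Integrable (fun v => (1/2)*‖v‖^2 * Sc a k g v + Q (Sc a k g v)) := by
    have heq : (fun v => (1/2)*‖v‖^2 * Sc a k g v + Q (Sc a k g v))
        = fun v => a ^ (-(2*k+2)) * ((1/2)*‖a • v‖^2 * g (a • v) + Q (g (a • v))) :=
      funext key
    rw [heq]; exact hEcomp.const_mul _
  have hcs : ∫ v : Space, g (a • v) = a ^ (-(3:ℝ)) * ∫ v : Space, g v := by
    rw [Measure.integral_comp_smul_of_nonneg volume g a (hR := ha.le), smul_eq_mul,
      finrank_space, h3]
  have hmass : ∫ v : Space, Sc a k g v = a ^ (-(2*k+3)) * m := by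
    simp only [Sc]
    rw [integral_const_mul, hcs, hgm, ← mul_assoc, ← Real.rpow_add ha]
    norm_num
    exact Or.inl (by congr 1; ring)
  have hkin : kinQint Q (Sc a k g) = a ^ (-(2*k+5)) * kinQint Q g := by
    unfold kinQint
    simp only [key]
    rw [integral_const_mul,
      Measure.integral_comp_smul_of_nonneg volume
        (fun u => (1/2)*‖u‖^2 * g u + Q (g u)) a (hR := ha.le),
      smul_eq_mul, finrank_space, h3, ← mul_assoc, ← Real.rpow_add ha]
    norm_num
    exact Or.inl (by congr 1; ring)
  exact ⟨⟨fun v => mul_nonneg hb.le (hg0 _), hSint, hSE, hmass⟩, hkin⟩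

lemma gset_zero (hQ0 : Q 0 = 0) : (0 : Space → ℝ) ∈ Gset Q 0 ∧ kinQint Q 0 = 0 := by
  have heq : (fun v : Space => (1/2) * ‖v‖^2 * (0 : Space → ℝ) v + Q ((0 : Space → ℝ) v))
      = fun _ => (0:ℝ) := by
    funext v; simp [hQ0]
  refine ⟨⟨fun v => le_refl 0, ?_, ?_, by simp⟩, ?_⟩
  · exact integrable_zero Space ℝ (volume : Measure Space)
  · rw [heq]; exact integrable_zero _ _ _
  · unfold kinQint; rw [heq]; simp

lemma gset_one_nonempty (hC : 0 < C) (hQeq : ∀ f : ℝ, 0 ≤ f → Q f = C * f ^ (1 + 1/k))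
    (hQ0 : Q 0 = 0) : (Gset Q 1).Nonempty := by
  classical
  set B := Metric.closedBall (0:Space) 1 with hB
  have hBmeas : MeasurableSet B := measurableSet_closedBall
  have hBfin : volume B < ⊤ := measure_closedBall_lt_top
  have hBpos : 0 < volume B := Metric.measure_closedBall_pos volume _ one_pos
  set m := (volume B).toReal with hm
  have hm0 : 0 < m := ENNReal.toReal_pos (ne_of_gt hBpos) (ne_of_lt hBfin)
  refine ⟨Set.indicator B (fun _ => m⁻¹), fun v => Set.indicator_nonneg (fun _ _ => by positivity) v, ?_, ?_, ?_⟩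
  · rw [integrable_indicator_iff hBmeas]
    exact integrableOn_const hBfin.ne
  · have heq : (fun v => (1/2)*‖v‖^2 * Set.indicator B (fun _ => m⁻¹) v
        + Q (Set.indicator B (fun _ => m⁻¹) v))
        = Set.indicator B (fun v => (1/2)*‖v‖^2 * m⁻¹ + Q m⁻¹) := by
      funext v
      by_cases hv : v ∈ B
      · simp [Set.indicator_of_mem hv]
      · simp [Set.indicator_of_notMem hv, hQ0]
    rw [heq, integrable_indicator_iff hBmeas]
    refine ContinuousOn.integrableOn_compact (isCompact_closedBall _ _) ?_
    exact Continuous.continuousOn (by fun_prop)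
  · rw [integral_indicator_const _ hBmeas, smul_eq_mul]
    exact mul_inv_cancel₀ (ne_of_gt hm0)

lemma lower_bound (hk : 0 < k) (hC : 0 < C)
    (hQeq : ∀ f : ℝ, 0 ≤ f → Q f = C * f ^ (1 + 1/k)) :
    ∃ c > (0:ℝ), ∀ g ∈ Gset Q 1, c ≤ kinQint Q g := by
  have hp1 : (1:ℝ) ≤ 1 + 1/k := by
    have : 0 < 1/k := by positivity
    linarith
  set vB := (volume (Metric.ball (0:Space) 1)).toReal with hvB
  have hvBpos : 0 < vB :=
    ENNReal.toReal_pos (ne_of_gt (Metric.measure_ball_pos volume _ one_pos))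
      (ne_of_lt measure_ball_lt_top)
  set c := min (min (((4*vB)⁻¹) ^ ((4:ℝ)/3)) (C/4)) (1/64) with hcdef
  have hcpos : 0 < c := by
    refine lt_min (lt_min ?_ ?_) ?_ <;> positivity
  refine ⟨c, hcpos, fun g hg => ?_⟩
  by_contra hlt
  push_neg at hlt
  obtain ⟨hg0, hgint, hgE, hgm⟩ := hg
  set E := kinQint Q g with hE
  have hEnn : 0 ≤ E := kinQint_nonneg hC hQeq hg0
  have hAmeas : AEStronglyMeasurable (fun v : Space => (1/2)*‖v‖^2 * g v) volume :=
    (Continuous.aestronglyMeasurable (by fun_prop)).mul hgint.aestronglyMeasurable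
  have hAint : Integrable (fun v : Space => (1/2)*‖v‖^2 * g v) := by
    refine hgE.mono' hAmeas (Filter.Eventually.of_forall fun v => ?_)
    rw [Real.norm_eq_abs, abs_of_nonneg (by have := hg0 v; positivity)]
    have := Qnn hC hQeq (hg0 v); linarith
  have hQint : Integrable (fun v : Space => Q (g v)) := by
    have heq : (fun v : Space => Q (g v))
        = fun v => ((1/2)*‖v‖^2*g v + Q (g v)) - (1/2)*‖v‖^2*g v := by
      funext v; ring
    rw [heq]; exact hgE.sub hAint
  have hsplit : E = (∫ v : Space, (1/2)*‖v‖^2 * g v) + ∫ v : Space, Q (g v) := by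
    rw [hE]; exact integral_add hAint hQint
  have hAE : ∫ v : Space, (1/2)*‖v‖^2 * g v ≤ E := by
    have : 0 ≤ ∫ v : Space, Q (g v) := integral_nonneg fun v => Qnn hC hQeq (hg0 v)
    linarith
  have hQE : ∫ v : Space, Q (g v) ≤ E := by
    have : 0 ≤ ∫ v : Space, (1/2)*‖v‖^2*g v :=
      integral_nonneg fun v => by have := hg0 v; positivity
    linarith
  set R := c ^ ((1:ℝ)/4) with hRdef
  have hRpos : 0 < R := Real.rpow_pos_of_pos hcpos _
  set B := Metric.closedBall (0:Space) R with hB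
  have hBmeas : MeasurableSet B := measurableSet_closedBall
  have h1 : (1:ℝ) = (∫ v in B, g v) + ∫ v in Bᶜ, g v := by
    rw [← hgm]; exact (integral_add_compl hBmeas hgint).symm
  have hR3 : R^(3:ℕ) = c ^ ((3:ℝ)/4) := by
    rw [hRdef, ← Real.rpow_natCast (c ^ ((1:ℝ)/4)) 3, ← Real.rpow_mul hcpos.le]
    norm_num
  have hR2 : R^(2:ℕ) = c ^ ((1:ℝ)/2) := by
    rw [hRdef, ← Real.rpow_natCast (c ^ ((1:ℝ)/4)) 2, ← Real.rpow_mul hcpos.le]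
    norm_num
  -- ball piece
  have hconst : IntegrableOn (fun _ : Space => (1:ℝ)) B volume :=
    integrableOn_const measure_closedBall_lt_top.ne
  have hball : ∫ v in B, g v ≤ R^(3:ℕ) * vB + E / C := by
    have step1 : ∫ v in B, g v ≤ ∫ v in B, (1 + Q (g v) / C) := by
      refine setIntegral_mono_on hgint.integrableOn
        (hconst.add ((hQint.div_const C).integrableOn)) hBmeas fun v _ => ?_
      have hx := hg0 v
      rw [hQeq _ hx, mul_div_cancel_left₀ _ (ne_of_gt hC)]
      rcases le_or_gt (g v) 1 with h | h
      · have : (0:ℝ) ≤ g v ^ (1+1/k) := Real.rpow_nonneg hx _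
        linarith
      · have : g v ≤ g v ^ (1+1/k) := by
          nth_rewrite 1 [← Real.rpow_one (g v)]
          exact Real.rpow_le_rpow_of_exponent_le h.le hp1
        linarith
    have step2 : ∫ v in B, ((1:ℝ) + Q (g v)/C)
        = (volume B).toReal + (∫ v in B, Q (g v))/C := by
      rw [integral_add hconst ((hQint.div_const C).integrableOn), setIntegral_const,
        smul_eq_mul, mul_one, integral_div]; rfl
    have step3 : ∫ v in B, Q (g v) ≤ E :=
      le_trans (setIntegral_le_integral hQint
        (Filter.Eventually.of_forall fun v => Qnn hC hQeq (hg0 v))) hQE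
    have step4 : (volume B).toReal = R^(3:ℕ) * vB := by
      rw [hB, Measure.addHaar_closedBall volume _ hRpos.le, finrank_space,
        ENNReal.toReal_mul, ENNReal.toReal_ofReal (by positivity)]
    have step5 : (∫ v in B, Q (g v))/C ≤ E/C := by gcongr
    calc ∫ v in B, g v ≤ ∫ v in B, (1 + Q (g v)/C) := step1
      _ = (volume B).toReal + (∫ v in B, Q (g v))/C := step2
      _ ≤ R^(3:ℕ) * vB + E/C := by rw [step4]; linarith
  -- tail piece
  have htail : ∫ v in Bᶜ, g v ≤ (2 / R^(2:ℕ)) * E := by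
    have hR2pos : (0:ℝ) < R^(2:ℕ) := by positivity
    have step1 : ∫ v in Bᶜ, g v
        ≤ ∫ v in Bᶜ, (2/R^(2:ℕ)) * ((1/2)*‖v‖^2 * g v) := by
      refine setIntegral_mono_on hgint.integrableOn
        ((hAint.const_mul _).integrableOn) hBmeas.compl fun v hv => ?_
      have hvR : R < ‖v‖ := by
        simp only [hB, Set.mem_compl_iff, Metric.mem_closedBall, dist_zero_right,
          not_le] at hv
        exact hv
      have hgv := hg0 v
      rw [div_mul_eq_mul_div, le_div_iff₀ hR2pos]
      nlinarith [mul_le_mul_of_nonneg_left (sq_le_sq' (by linarith [norm_nonneg v]) hvR.le) hgv]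
    have step2 : ∫ v in Bᶜ, (2/R^(2:ℕ)) * ((1/2)*‖v‖^2 * g v) ≤ (2/R^(2:ℕ)) * E := by
      rw [integral_const_mul]
      refine mul_le_mul_of_nonneg_left ?_ (by positivity)
      exact le_trans (setIntegral_le_integral hAint
        (Filter.Eventually.of_forall fun v => by have := hg0 v; positivity)) hAE
    exact le_trans step1 step2
  have hfin : (1:ℝ) ≤ R^(3:ℕ)*vB + E/C + (2/R^(2:ℕ))*E := by
    rw [h1]; linarith
  -- numeric contradiction
  have hc1 : c ≤ ((4*vB)⁻¹) ^ ((4:ℝ)/3) := le_trans (min_le_left _ _) (min_le_left _ _)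
  have hc2 : c ≤ C/4 := le_trans (min_le_left _ _) (min_le_right _ _)
  have hc3 : c ≤ 1/64 := min_le_right _ _
  have t1 : R^(3:ℕ) * vB ≤ 1/4 := by
    have h34 : c ^ ((3:ℝ)/4) ≤ (((4*vB)⁻¹) ^ ((4:ℝ)/3)) ^ ((3:ℝ)/4) :=
      Real.rpow_le_rpow hcpos.le hc1 (by norm_num)
    have heq : (((4*vB)⁻¹) ^ ((4:ℝ)/3)) ^ ((3:ℝ)/4) = (4*vB)⁻¹ := by
      rw [← Real.rpow_mul (by positivity)]
      norm_num
    rw [hR3]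
    calc c ^ ((3:ℝ)/4) * vB ≤ (4*vB)⁻¹ * vB := by
          refine mul_le_mul_of_nonneg_right ?_ hvBpos.le
          rw [← heq]; exact h34
      _ = 1/4 := by field_simp
  have t2 : E/C ≤ 1/4 := by
    rw [div_le_iff₀ hC]
    nlinarith
  have t3 : (2/R^(2:ℕ))*E ≤ 1/4 := by
    have hchalf : c ^ ((1:ℝ)/2) ≤ 1/8 := by
      have : c ^ ((1:ℝ)/2) ≤ ((1:ℝ)/64) ^ ((1:ℝ)/2) :=
        Real.rpow_le_rpow hcpos.le hc3 (by norm_num)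
      have h64 : ((1:ℝ)/64) ^ ((1:ℝ)/2) = 1/8 := by
        rw [show (1:ℝ)/64 = ((1:ℝ)/8)^(2:ℕ) by norm_num,
          ← Real.rpow_natCast ((1:ℝ)/8) 2, ← Real.rpow_mul (by norm_num)]
        norm_num
      linarith [h64 ▸ this]
    have hEc : E ≤ c := hlt.le
    have hdiv : (2/R^(2:ℕ))*E ≤ (2/R^(2:ℕ))*c :=
      mul_le_mul_of_nonneg_left hEc (by positivity)
    have hcc : (2/R^(2:ℕ))*c = 2 * c ^ ((1:ℝ)/2) := by
      have hhalf : c ^ ((1:ℝ)/2) * c ^ ((1:ℝ)/2) = c := by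
        rw [← Real.rpow_add hcpos]; norm_num
      have hhpos : (0:ℝ) < c ^ ((1:ℝ)/2) := Real.rpow_pos_of_pos hcpos _
      rw [hR2, div_mul_eq_mul_div, div_eq_iff (ne_of_gt hhpos)]
      linear_combination (-2) * hhalf
    rw [hcc] at hdiv
    linarith
  linarith

end helpers

theorem Phi_of_powerLaw' (Q : ℝ → ℝ) (hQ0 : Q 0 = 0)
    (k n : ℝ) (hk : 0 < k) (hn : n = k + 3/2)
    (C : ℝ) (hC : 0 < C) (hQeq : ∀ f : ℝ, 0 ≤ f → Q f = C * f ^ (1 + 1/k)) :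
    ∃ C' > (0:ℝ), ∀ ρ : ℝ, 0 ≤ ρ → Phi Q ρ = C' * ρ ^ (1 + 1/n) := by
  have hn0 : 0 < n := by rw [hn]; linarith
  obtain ⟨c, hc, hcb⟩ := lower_bound hk hC hQeq
  obtain ⟨g₁, hg₁⟩ := gset_one_nonempty hC hQeq hQ0
  have hne : (kinQint Q '' Gset Q 1).Nonempty := ⟨_, Set.mem_image_of_mem _ hg₁⟩
  have hlb : ∀ y ∈ kinQint Q '' Gset Q 1, c ≤ y := by
    rintro y ⟨g, hg, rfl⟩; exact hcb g hg
  refine ⟨Phi Q 1, lt_of_lt_of_le hc (le_csInf hne hlb), fun ρ hρ => ?_⟩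
  rcases eq_or_lt_of_le hρ with h0 | hρpos
  · -- ρ = 0
    subst hn
    rw [← h0, Real.zero_rpow (by positivity), mul_zero]
    have hmem : (0:ℝ) ∈ kinQint Q '' Gset Q 0 := by
      exact ⟨0, (gset_zero hQ0).1, (gset_zero hQ0).2⟩
    have hnn : ∀ y ∈ kinQint Q '' Gset Q 0, (0:ℝ) ≤ y := by
      rintro y ⟨g, hg, rfl⟩; exact kinQint_nonneg hC hQeq hg.1
    exact le_antisymm (csInf_le ⟨0, hnn⟩ hmem) (le_csInf ⟨0, hmem⟩ hnn)
  · -- ρ > 0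
    set a : ℝ := ρ ^ (-(1/(2*k+3))) with hadef
    have h2k3 : (0:ℝ) < 2*k+3 := by linarith
    have ha : 0 < a := Real.rpow_pos_of_pos hρpos _
    have haK : a ^ (-(2*k+3)) = ρ := by
      rw [hadef, ← Real.rpow_mul hρ]
      rw [show -(1/(2*k+3)) * -(2*k+3) = 1 by field_simp]
      exact Real.rpow_one ρ
    have haE : a ^ (-(2*k+5)) = ρ ^ (1 + 1/n) := by
      rw [hadef, ← Real.rpow_mul hρ]
      congr 1
      have hn3 : n ≠ 0 := ne_of_gt hn0
      rw [hn]
      field_simp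
      ring
    have hb0 : a ^ (-(2*k)) ≠ 0 := ne_of_gt (Real.rpow_pos_of_pos ha _)
    have hSS : ∀ f : Space → ℝ, Sc a k (Sc a⁻¹ k f) = f := by
      intro f; funext v
      simp only [Sc, smul_smul]
      rw [inv_mul_cancel₀ (ne_of_gt ha), one_smul, Real.inv_rpow ha.le, ← mul_assoc,
        mul_inv_cancel₀ hb0, one_mul]
    have hinvmass : (a⁻¹) ^ (-(2*k+3)) * ρ = 1 := by
      rw [Real.inv_rpow ha.le, haK, inv_mul_cancel₀ (ne_of_gt hρpos)]
    have himg : kinQint Q '' Gset Q ρ = (ρ ^ (1 + 1/n)) • (kinQint Q '' Gset Q 1) := by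
      ext y
      constructor
      · rintro ⟨f, hf, rfl⟩
        have hai : 0 < a⁻¹ := inv_pos.2 ha
        obtain ⟨hmem, _⟩ := Sc_mem hk hC hQeq hai hf
        rw [hinvmass] at hmem
        obtain ⟨_, hkin⟩ := Sc_mem hk hC hQeq ha hmem
        rw [hSS f] at hkin
        refine Set.mem_smul_set.2 ⟨kinQint Q (Sc a⁻¹ k f), Set.mem_image_of_mem _ hmem, ?_⟩
        rw [smul_eq_mul, ← haE, ← hkin]
      · intro hy
        obtain ⟨x, ⟨g, hg, rfl⟩, rfl⟩ := Set.mem_smul_set.1 hy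
        obtain ⟨hmem, hkin⟩ := Sc_mem hk hC hQeq ha hg
        rw [mul_one, haK] at hmem
        exact ⟨Sc a k g, hmem, by rw [hkin, haE, smul_eq_mul]⟩
    have hmul : Phi Q ρ = ρ ^ (1 + 1/n) * Phi Q 1 := by
      rw [Phi, himg, Real.sInf_smul_of_nonneg (Real.rpow_nonneg hρ _) _, smul_eq_mul, Phi]
    rw [hmul, mul_comm]


/-- If `Q(f) = C f^{1+1/k}` for all `f ≥ 0` (with `k > 0`, `C > 0`),
then `Φ(ρ) = C' ρ^{1+1/n}` for all `ρ ≥ 0`, where `n = k + 3/2`. -/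
theorem Phi_of_powerLaw (Q Q' : ℝ → ℝ) (hQ : QHyp Q Q')
    (k n : ℝ) (hk : 0 < k) (hn : n = k + 3/2)
    (C : ℝ) (hC : 0 < C) (hQeq : ∀ f : ℝ, 0 ≤ f → Q f = C * f ^ (1 + 1/k)) :
    ∃ C' > (0:ℝ), ∀ ρ : ℝ, 0 ≤ ρ → Phi Q ρ = C' * ρ ^ (1 + 1/n) :=
  Phi_of_powerLaw' Q hQ.zero k n hk hn C hC hQeq
end
end

section
/- Let k > 0 and n = k + 3/2. If there are constants C > 0 and f₁ ≥ 0 with Q(f) ≥ C f^{1+1/k} for all f ≥ f₁, then there are constants C' > 0 and ρ₁ ≥ 0 such that Φ(ρ) ≥ C' ρ^{1+1/n} for all ρ ≥ ρ₁. If the bound on Q holds for all f ≥ 0, then the bound on Φ holds for all ρ ≥ 0. -/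
open MeasureTheory Real Filter Topology

noncomputable section

lemma QHyp.Qnonneg {Q Q' : ℝ → ℝ} (hQ : QHyp Q Q') {t : ℝ} (ht : 0 ≤ t) : 0 ≤ Q t := by
  rcases ht.eq_or_lt with h | h
  · simp [← h, hQ.zero]
  have hder := hQ.hasDeriv 0 Set.self_mem_Ici
  rw [hasDerivWithinAt_iff_tendsto_slope] at hder
  have hset : (Set.Ici (0:ℝ)) \ {0} = Set.Ioi 0 := by
    ext x; constructor
    · rintro ⟨h1, h2⟩
      exact lt_of_le_of_ne h1 (Ne.symm (by simpa using h2))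
    · intro hx; exact ⟨Set.mem_Ici.2 (le_of_lt (Set.mem_Ioi.1 hx)), by simp [ne_of_gt (Set.mem_Ioi.1 hx)]⟩
  rw [hset, hQ.derivZero] at hder
  have hev : ∀ᶠ x in 𝓝[>] (0:ℝ), slope Q 0 x ≤ Q t / t := by
    filter_upwards [Ioo_mem_nhdsGT_of_mem (Set.mem_Ico.2 ⟨le_refl 0, h⟩)] with x hx
    obtain ⟨hx0, hxt⟩ := hx
    have ha : (0:ℝ) ≤ 1 - x/t := by
      have : x/t ≤ 1 := (div_le_one h).2 hxt.le
      linarith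
    have hconv := hQ.strictConvex.convexOn.2 Set.self_mem_Ici (Set.mem_Ici.2 h.le)
      ha (by positivity : (0:ℝ) ≤ x/t) (by ring : (1 - x/t) + x/t = 1)
    simp only [smul_eq_mul, mul_zero, zero_add, hQ.zero] at hconv
    have hxx : x/t * t = x := div_mul_cancel₀ x h.ne'
    rw [hxx] at hconv
    rw [slope_def_field, hQ.zero, sub_zero, sub_zero]
    calc Q x / x ≤ (x/t * Q t) / x := by gcongr
      _ = Q t / t := by field_simp
  have hle : (0:ℝ) ≤ Q t / t := le_of_tendsto hder hev
  have := mul_nonneg hle h.le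
  rwa [div_mul_cancel₀ _ h.ne'] at this



def cSp : ℝ := (volume (Metric.ball (0:Space) 1)).toReal

lemma cSp_pos : 0 < cSp :=
  ENNReal.toReal_pos (Metric.measure_ball_pos volume 0 one_pos).ne' measure_ball_lt_top.ne

lemma vol_ball (R : ℝ) (hR : 0 ≤ R) :
    (volume (Metric.ball (0:Space) R)).toReal = R^3 * cSp := by
  rw [Measure.addHaar_ball volume 0 hR, ENNReal.toReal_mul,
    ENNReal.toReal_ofReal (by positivity)]
  congr 2
  simp [finrank_euclideanSpace_fin]

-- key integral inequality
lemma key {Q : ℝ → ℝ} (hQnn : ∀ t, 0 ≤ t → 0 ≤ Q t)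
    {k C F : ℝ} (hk : 0 < k) (hC : 0 < C) (hF : 0 ≤ F)
    (hQge : ∀ f, F ≤ f → C * f ^ (1 + 1/k) ≤ Q f)
    {r : ℝ} {g : Space → ℝ} (hg : g ∈ Gset Q r)
    {R s : ℝ} (hR : 0 < R) (hs : 0 < s) (hFs : F ≤ s) :
    r ≤ cSp * s * R^3 + (2/R^2) * kinQint Q g + (1/(C * s^(1/k))) * kinQint Q g := by
  obtain ⟨hg0, hg1, hg2, hg4⟩ := hg
  set h : Space → ℝ := fun v => (1/2) * ‖v‖^2 * g v + Q (g v) with hh_def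
  have hh : Integrable h := hg2
  have hskpos : (0:ℝ) < s^(1/k) := Real.rpow_pos_of_pos hs _
  have hT : Integrable (fun v : Space => (1/2) * ‖v‖^2 * g v) := by
    apply hh.mono' ?_ ?_
    · exact ((continuous_const.mul (continuous_norm.pow 2)).aestronglyMeasurable).mul
        hg1.aestronglyMeasurable
    · filter_upwards with v
      have hgv := hg0 v
      have h1 : 0 ≤ (1/2) * ‖v‖^2 * g v := by positivity
      have h2 : 0 ≤ Q (g v) := hQnn _ (hg0 v)
      rw [Real.norm_of_nonneg h1]
      simp only [hh_def]
      linarith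
  have hK : Integrable (fun v : Space => Q (g v)) := by
    have h' := hh.sub hT
    have heq : (h - fun v : Space => (1/2) * ‖v‖^2 * g v) = fun v : Space => Q (g v) := by
      funext v; simp [hh_def, Pi.sub_apply]
    rwa [heq] at h'
  have hKnn : ∀ v : Space, 0 ≤ Q (g v) := fun v => hQnn _ (hg0 v)
  have hTnn : ∀ v : Space, 0 ≤ (1/2) * ‖v‖^2 * g v := fun v => by have := hg0 v; positivity
  have hTle : ∫ v : Space, (1/2) * ‖v‖^2 * g v ≤ kinQint Q g := by
    rw [kinQint, integral_add hT hK]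
    have : 0 ≤ ∫ v : Space, Q (g v) := integral_nonneg hKnn
    linarith
  have hKle : ∫ v : Space, Q (g v) ≤ kinQint Q g := by
    rw [kinQint, integral_add hT hK]
    have : 0 ≤ ∫ v : Space, (1/2) * ‖v‖^2 * g v := integral_nonneg hTnn
    linarith
  have hA1 : Integrable ((Metric.ball (0:Space) R).indicator fun _ => s) :=
    (integrable_indicator_iff measurableSet_ball).2
      (integrableOn_const measure_ball_lt_top.ne)
  -- pointwise bound
  have hpt : ∀ v : Space, g v ≤ (Metric.ball (0:Space) R).indicator (fun _ => s) v
      + (2/R^2) * ((1/2) * ‖v‖^2 * g v) + (1/(C * s^(1/k))) * Q (g v) := by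
    intro v
    have h2 : 0 ≤ (2/R^2) * ((1/2) * ‖v‖^2 * g v) := by
      have := hg0 v; positivity
    have h3 : 0 ≤ (1/(C * s^(1/k))) * Q (g v) :=
      mul_nonneg (by positivity) (hKnn v)
    by_cases hv : v ∈ Metric.ball (0:Space) R
    · rw [Set.indicator_of_mem hv]
      by_cases hgs : g v ≤ s
      · linarith
      · push_neg at hgs
        have hgv : 0 < g v := hs.trans hgs
        have hb : C * (g v * s^(1/k)) ≤ Q (g v) := by
          refine le_trans ?_ (hQge (g v) (le_trans hFs hgs.le))
          rw [Real.rpow_add hgv, Real.rpow_one]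
          have : s^(1/k) ≤ (g v)^(1/k) :=
            Real.rpow_le_rpow hs.le hgs.le (by positivity)
          gcongr
        have h4 : g v ≤ (1/(C * s^(1/k))) * Q (g v) := by
          rw [one_div, inv_mul_eq_div, le_div_iff₀ (by positivity)]
          calc g v * (C * s^(1/k)) = C * (g v * s^(1/k)) := by ring
            _ ≤ Q (g v) := hb
        have h0 : (0:ℝ) ≤ s := hs.le
        linarith
    · rw [Set.indicator_of_notMem hv]
      have hvR : R ≤ ‖v‖ := by
        simpa [Metric.mem_ball, dist_zero_right, not_lt] using hv
      have hRv : R^2 ≤ ‖v‖^2 := by nlinarith [norm_nonneg v]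
      have h5 : g v ≤ (2/R^2) * ((1/2) * ‖v‖^2 * g v) := by
        rw [show (2/R^2) * ((1/2) * ‖v‖^2 * g v) = (‖v‖^2/R^2) * g v by ring]
        exact le_mul_of_one_le_left (hg0 v) ((one_le_div (by positivity)).2 hRv)
      linarith
  -- integrate
  have hRHS1 : Integrable (fun v : Space =>
      (Metric.ball (0:Space) R).indicator (fun _ => s) v
      + (2/R^2) * ((1/2) * ‖v‖^2 * g v)) := hA1.add (hT.const_mul _)
  have hRHS : Integrable (fun v : Space =>
      (Metric.ball (0:Space) R).indicator (fun _ => s) v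
      + (2/R^2) * ((1/2) * ‖v‖^2 * g v) + (1/(C * s^(1/k))) * Q (g v)) :=
    hRHS1.add (hK.const_mul _)
  have hmono := integral_mono hg1 hRHS hpt
  rw [hg4] at hmono
  rw [integral_add hRHS1 (hK.const_mul _), integral_add hA1 (hT.const_mul _),
    integral_indicator_const _ measurableSet_ball,
    integral_const_mul, integral_const_mul] at hmono
  have hvol : volume.real (Metric.ball (0:Space) R) • s = cSp * s * R^3 := by
    rw [smul_eq_mul, measureReal_def, vol_ball R hR.le]; ring
  rw [hvol] at hmono
  have c2 : (0:ℝ) ≤ 2/R^2 := by positivity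
  have c3 : (0:ℝ) ≤ 1/(C * s^(1/k)) := by positivity
  have := mul_le_mul_of_nonneg_left hTle c2
  have := mul_le_mul_of_nonneg_left hKle c3
  linarith

lemma kinQint_nonneg_s8 {Q : ℝ → ℝ} (hQnn : ∀ t, 0 ≤ t → 0 ≤ Q t)
    {r : ℝ} {g : Space → ℝ} (hg : g ∈ Gset Q r) : 0 ≤ kinQint Q g := by
  obtain ⟨hg0, -, -, -⟩ := hg
  refine integral_nonneg fun v => ?_
  have := hg0 v
  exact add_nonneg (by positivity) (hQnn _ (hg0 v))

lemma extract {r u c a : ℝ} (hr : 0 < r) (hu : 0 < u) (hc : 0 < c) (ha : 0 < a)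
    (h : r/6 ≤ c * u ^ a) : (1/(6*c))^(1/a) * r^(1+1/a) ≤ u * r := by
  have h' : r/(6*c) ≤ u^a := (div_le_iff₀ (by positivity)).2 (by linarith)
  have h2 := Real.rpow_le_rpow (by positivity) h' (by positivity : (0:ℝ) ≤ 1/a)
  rw [← Real.rpow_mul hu.le, mul_one_div_cancel ha.ne', Real.rpow_one] at h2
  have h3 : (1/(6*c))^(1/a) * r^(1/a) = (r/(6*c))^((1:ℝ)/a) := by
    rw [show r/(6*c) = 1/(6*c) * r by ring, Real.mul_rpow (by positivity) hr.le]
  calc (1/(6*c))^(1/a) * r^(1+1/a) = (1/(6*c))^(1/a) * r^(1/a) * r := by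
        rw [Real.rpow_add hr, Real.rpow_one]; ring
    _ = (r/(6*c))^((1:ℝ)/a) * r := by rw [h3]
    _ ≤ u * r := mul_le_mul_of_nonneg_right h2 hr.le

lemma main_est {Q : ℝ → ℝ} (hQnn : ∀ t, 0 ≤ t → 0 ≤ Q t)
    {k n C F : ℝ} (hk : 0 < k) (hC : 0 < C) (hF : 0 ≤ F) (hn : n = k + 3/2)
    (hQge : ∀ f, F ≤ f → C * f ^ (1 + 1/k) ≤ Q f)
    {r : ℝ} (hr : 0 < r) {g : Space → ℝ} (hg : g ∈ Gset Q r) :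
    (1/(6*(cSp*(3/C)^k*6^((3:ℝ)/2))))^(1/n) * r^(1+1/n) ≤ kinQint Q g ∨
    (0 < F ∧ (1/(6*(cSp*(F+1)*6^((3:ℝ)/2))))^((2:ℝ)/3) * r^((5:ℝ)/3) ≤ kinQint Q g) := by
  have hnpos : 0 < n := by rw [hn]; linarith
  set E := kinQint Q g with hE_def
  have hEnn : 0 ≤ E := kinQint_nonneg_s8 hQnn hg
  -- E > 0
  have hEpos : 0 < E := by
    rcases hEnn.eq_or_lt with hE0 | hEpos
    · exfalso
      set R : ℝ := min 1 (r/(2*cSp*(F+1)))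
      have hRpos : 0 < R := lt_min one_pos (by have := cSp_pos; positivity)
      have hkey := key hQnn hk hC hF hQge hg hRpos
        (by linarith : (0:ℝ) < F + 1) (by linarith : F ≤ F + 1)
      rw [← hE_def, ← hE0] at hkey
      have hR3 : R^3 ≤ R := by
        calc R^3 ≤ R^1 := pow_le_pow_of_le_one hRpos.le (min_le_left _ _) (by norm_num)
          _ = R := pow_one R
      have hRle : R ≤ r/(2*cSp*(F+1)) := min_le_right _ _
      have hc : 0 < cSp := cSp_pos
      have : cSp * (F+1) * R^3 ≤ cSp * (F+1) * (r/(2*cSp*(F+1))) := by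
        apply mul_le_mul_of_nonneg_left (hR3.trans hRle) (by positivity)
      have heq : cSp * (F+1) * (r/(2*cSp*(F+1))) = r/2 := by
        field_simp
      nlinarith
    · exact hEpos
  set u : ℝ := E / r with hu_def
  have hu : 0 < u := div_pos hEpos hr
  set R : ℝ := (6*u)^((1:ℝ)/2) with hR_def
  have hRpos : 0 < R := Real.rpow_pos_of_pos (by positivity) _
  set t : ℝ := (3*u/C)^k with ht_def
  have ht : 0 < t := Real.rpow_pos_of_pos (by positivity) _
  have hkey := key hQnn hk hC hF hQge hg hRpos
    (by linarith : (0:ℝ) < F + t) (by linarith : F ≤ F + t)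
  rw [← hE_def] at hkey
  have h6u : (0:ℝ) ≤ 6*u := by positivity
  have hR2 : R^2 = 6*u := by
    rw [hR_def, ← Real.rpow_natCast ((6*u)^((1:ℝ)/2)) 2, ← Real.rpow_mul h6u]
    norm_num
  have hR3 : R^3 = (6*u)^((3:ℝ)/2) := by
    rw [hR_def, ← Real.rpow_natCast ((6*u)^((1:ℝ)/2)) 3, ← Real.rpow_mul h6u]
    norm_num
  have hterm2 : (2/R^2) * E = r/3 := by
    rw [hR2, hu_def]; field_simp; ring
  have ht1 : t^((1:ℝ)/k) = 3*u/C := by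
    rw [ht_def, ← Real.rpow_mul (by positivity), mul_one_div_cancel hk.ne', Real.rpow_one]
  have hterm3 : (1/(C*(F+t)^(1/k))) * E ≤ r/3 := by
    have hmono : 3*u/C ≤ (F+t)^((1:ℝ)/k) := by
      rw [← ht1]
      exact Real.rpow_le_rpow ht.le (by linarith) (by positivity)
    have h3uC : (0:ℝ) < 3*u/C := by positivity
    have hinv : 1/(C*(F+t)^((1:ℝ)/k)) ≤ 1/(C*(3*u/C)) := by
      apply one_div_le_one_div_of_le (by positivity)
      exact mul_le_mul_of_nonneg_left hmono hC.le
    have heq : 1/(C*(3*u/C)) * E = r/3 := by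
      rw [hu_def]; field_simp
    calc (1/(C*(F+t)^(1/k))) * E ≤ 1/(C*(3*u/C)) * E :=
          mul_le_mul_of_nonneg_right hinv hEnn
      _ = r/3 := heq
  have hsum : r/3 ≤ cSp*F*R^3 + cSp*t*R^3 := by nlinarith
  have hc : 0 < cSp := cSp_pos
  by_cases hcase : r/6 ≤ cSp*t*R^3
  · left
    have et : t = (3/C)^k * u^k := by
      rw [ht_def, show 3*u/C = 3/C*u by ring, Real.mul_rpow (by positivity) hu.le]
    have eR : R^3 = 6^((3:ℝ)/2) * u^((3:ℝ)/2) := by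
      rw [hR3, Real.mul_rpow (by norm_num) hu.le]
    have eu : u^k * u^((3:ℝ)/2) = u^n := by
      rw [hn, Real.rpow_add hu]
    have hA : r/6 ≤ (cSp*(3/C)^k*6^((3:ℝ)/2)) * u^n := by
      calc r/6 ≤ cSp*t*R^3 := hcase
        _ = (cSp*(3/C)^k*6^((3:ℝ)/2)) * (u^k * u^((3:ℝ)/2)) := by rw [et, eR]; ring
        _ = (cSp*(3/C)^k*6^((3:ℝ)/2)) * u^n := by rw [eu]
    have hextract := extract hr hu (by positivity) hnpos hA
    rw [hu_def, div_mul_cancel₀ E hr.ne'] at hextract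
    exact hextract
  · right
    push_neg at hcase
    have hB0 : r/6 ≤ cSp*F*R^3 := by linarith
    have hFpos : 0 < F := by
      rcases hF.eq_or_lt with hF0 | hFpos
      · exfalso
        rw [← hF0] at hB0
        simp only [mul_zero, zero_mul] at hB0
        nlinarith
      · exact hFpos
    refine ⟨hFpos, ?_⟩
    have eR : R^3 = 6^((3:ℝ)/2) * u^((3:ℝ)/2) := by
      rw [hR3, Real.mul_rpow (by norm_num) hu.le]
    have hB : r/6 ≤ (cSp*(F+1)*6^((3:ℝ)/2)) * u^((3:ℝ)/2) := by
      calc r/6 ≤ cSp*F*R^3 := hB0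
        _ = (cSp*F*6^((3:ℝ)/2)) * u^((3:ℝ)/2) := by rw [eR]; ring
        _ ≤ (cSp*(F+1)*6^((3:ℝ)/2)) * u^((3:ℝ)/2) := by
            have h2 : (0:ℝ) ≤ u^((3:ℝ)/2) := by positivity
            have h3 : cSp*F*6^((3:ℝ)/2) ≤ cSp*(F+1)*6^((3:ℝ)/2) := by
              have h1 : (0:ℝ) ≤ 6^((3:ℝ)/2) := by positivity
              nlinarith
            exact mul_le_mul_of_nonneg_right h3 h2
    have hextract := extract hr hu (by positivity) (by norm_num : (0:ℝ) < (3:ℝ)/2) hB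
    rw [hu_def, div_mul_cancel₀ E hr.ne'] at hextract
    have e23 : (1:ℝ) / (3/2) = 2/3 := by norm_num
    rw [e23, show (1:ℝ) + 2/3 = 5/3 from by norm_num] at hextract
    exact hextract


lemma Gset_nonempty {Q : ℝ → ℝ} (hQ0 : Q 0 = 0) {r : ℝ} (hr : 0 ≤ r) :
    (Gset Q r).Nonempty := by
  set vc : ℝ := (volume (Metric.closedBall (0:Space) 1)).toReal with hvc_def
  have hvc : 0 < vc := by
    refine ENNReal.toReal_pos ?_ measure_closedBall_lt_top.ne
    exact ((Metric.measure_ball_pos volume 0 one_pos).trans_le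
      (measure_mono Metric.ball_subset_closedBall)).ne'
  have ha : 0 ≤ r/vc := div_nonneg hr hvc.le
  refine ⟨(Metric.closedBall (0:Space) 1).indicator (fun _ => r/vc), ?_, ?_, ?_, ?_⟩
  · intro v
    exact Set.indicator_nonneg (fun _ _ => ha) v
  · exact (integrable_indicator_iff measurableSet_closedBall).2
      (integrableOn_const measure_closedBall_lt_top.ne)
  · have heq : (fun v : Space => (1/2)*‖v‖^2*
        ((Metric.closedBall (0:Space) 1).indicator (fun _ => r/vc) v)
        + Q ((Metric.closedBall (0:Space) 1).indicator (fun _ => r/vc) v))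
        = (Metric.closedBall (0:Space) 1).indicator
            (fun v => (1/2)*‖v‖^2*(r/vc) + Q (r/vc)) := by
      funext v
      by_cases hv : v ∈ Metric.closedBall (0:Space) 1
      · simp [Set.indicator_of_mem hv]
      · simp [Set.indicator_of_notMem hv, hQ0]
    rw [heq]
    refine (integrable_indicator_iff measurableSet_closedBall).2 ?_
    exact ContinuousOn.integrableOn_compact (isCompact_closedBall 0 1)
      (Continuous.continuousOn (by continuity))
  · rw [integral_indicator_const _ measurableSet_closedBall, smul_eq_mul, measureReal_def, ← hvc_def]
    field_simp

lemma Phi_lb {Q : ℝ → ℝ} (hQ0 : Q 0 = 0) {r : ℝ} (hr : 0 ≤ r) {b : ℝ}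
    (hb : ∀ g ∈ Gset Q r, b ≤ kinQint Q g) : b ≤ Phi Q r := by
  refine le_csInf ((Gset_nonempty hQ0 hr).image _) ?_
  rintro E ⟨g, hg, rfl⟩
  exact hb g hg


/-- If `Q(f) ≥ C f^{1+1/k}` for all large `f` (with `k > 0`, `C > 0`),
then `Φ(ρ) ≥ C' ρ^{1+1/n}` for all large `ρ`, where `n = k + 3/2`; if the bound on `Q`
holds for all `f ≥ 0`, then the bound on `Φ` holds for all `ρ ≥ 0`. -/
theorem Phi_lower_bound (Q Q' : ℝ → ℝ) (hQ : QHyp Q Q')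
    (k n : ℝ) (hk : 0 < k) (hn : n = k + 3/2)
    (C f₁ : ℝ) (hC : 0 < C) (hf₁ : 0 ≤ f₁)
    (hQge : ∀ f : ℝ, f₁ ≤ f → C * f ^ (1 + 1/k) ≤ Q f) :
    (∃ C' > (0:ℝ), ∃ ρ₁ ≥ (0:ℝ), ∀ ρ : ℝ, ρ₁ ≤ ρ → C' * ρ ^ (1 + 1/n) ≤ Phi Q ρ) ∧
    ((∀ f : ℝ, 0 ≤ f → C * f ^ (1 + 1/k) ≤ Q f) →
      ∃ C' > (0:ℝ), ∀ ρ : ℝ, 0 ≤ ρ → C' * ρ ^ (1 + 1/n) ≤ Phi Q ρ) := by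
  have hQnn : ∀ t, 0 ≤ t → 0 ≤ Q t := fun t ht => hQ.Qnonneg ht
  have hnpos : 0 < n := by rw [hn]; linarith
  have hcSp := cSp_pos
  set B₁ : ℝ := (1/(6*(cSp*(3/C)^k*6^((3:ℝ)/2))))^(1/n) with hB1
  have hB1pos : 0 < B₁ := Real.rpow_pos_of_pos (by positivity) _
  constructor
  · set B₂ : ℝ := (1/(6*(cSp*(f₁+1)*6^((3:ℝ)/2))))^((2:ℝ)/3) with hB2
    have hB2pos : 0 < B₂ := Real.rpow_pos_of_pos (by positivity) _
    refine ⟨min B₁ B₂, lt_min hB1pos hB2pos, 1, by norm_num, fun ρ hρ => ?_⟩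
    have hρ0 : (0:ℝ) < ρ := lt_of_lt_of_le one_pos hρ
    refine Phi_lb hQ.zero hρ0.le fun g hg => ?_
    rcases main_est hQnn hk hC hf₁ hn hQge hρ0 hg with hA | ⟨-, hB⟩
    · calc min B₁ B₂ * ρ^(1+1/n) ≤ B₁ * ρ^(1+1/n) :=
            mul_le_mul_of_nonneg_right (min_le_left _ _) (by positivity)
        _ ≤ kinQint Q g := hA
    · have hexp : 1 + 1/n ≤ (5:ℝ)/3 := by
        have h32 : (3:ℝ)/2 ≤ n := by rw [hn]; linarith
        have h23 : 1/n ≤ (2:ℝ)/3 := by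
          rw [div_le_div_iff₀ hnpos (by norm_num)]
          linarith
        linarith
      calc min B₁ B₂ * ρ^(1+1/n) ≤ B₂ * ρ^((5:ℝ)/3) :=
            mul_le_mul (min_le_right _ _)
              (Real.rpow_le_rpow_of_exponent_le hρ hexp) (by positivity) hB2pos.le
        _ ≤ kinQint Q g := hB
  · intro hall
    refine ⟨B₁, hB1pos, fun ρ hρ => ?_⟩
    rcases hρ.eq_or_lt with hρ0 | hρ0
    · rw [← hρ0, Real.zero_rpow (by positivity : (0:ℝ) < 1+1/n).ne', mul_zero]
      refine Real.sInf_nonneg ?_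
      rintro E ⟨g, hg, rfl⟩
      exact kinQint_nonneg_s8 hQnn hg
    · refine Phi_lb hQ.zero hρ0.le fun g hg => ?_
      rcases main_est hQnn hk hC (le_refl 0) hn (fun f hf => hall f hf) hρ0 hg
        with hA | ⟨hF, -⟩
      · exact hA
      · exact absurd hF (lt_irrefl 0)
end
end

section
/- Let k > 0 and n = k + 3/2. If there are constants C > 0 and f₁ > 0 with Q(f) ≤ C f^{1+1/k} for all 0 ≤ f ≤ f₁, then there are constants C' > 0 and ρ₁ > 0 such that Φ(ρ) ≤ C' ρ^{1+1/n} for all 0 ≤ ρ ≤ ρ₁. If the bound on Q holds for all f ≥ 0, then the bound on Φ holds for all ρ ≥ 0. -/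
open MeasureTheory Real Filter Topology

noncomputable section

def Vb : ℝ := (volume (Metric.closedBall (0:Space) 1)).toReal

lemma Vb_pos : 0 < Vb := by
  refine ENNReal.toReal_pos (ne_of_gt (Metric.measure_closedBall_pos volume (0:Space) one_pos)) ?_
  exact measure_closedBall_lt_top.ne

lemma vol_cb {R : ℝ} (hR : 0 ≤ R) :
    (volume (Metric.closedBall (0:Space) R)).toReal = R^3 * Vb := by
  rw [MeasureTheory.Measure.addHaar_closedBall' volume 0 hR]
  rw [ENNReal.toReal_mul, ENNReal.toReal_ofReal (by positivity)]
  simp [Vb]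

lemma bdd_below (Q : ℝ → ℝ) (hQnn : ∀ f, 0 ≤ f → 0 ≤ Q f) (r : ℝ) :
    BddBelow (kinQint Q '' Gset Q r) := by
  refine ⟨0, ?_⟩
  rintro x ⟨g, hg, rfl⟩
  exact integral_nonneg fun v => add_nonneg
    (by have := hg.1 v; positivity) (hQnn _ (hg.1 v))

lemma Phi_le_mem (Q : ℝ → ℝ) (hQnn : ∀ f, 0 ≤ f → 0 ≤ Q f) {r : ℝ} {g : Space → ℝ}
    (hg : g ∈ Gset Q r) : Phi Q r ≤ kinQint Q g :=
  csInf_le (bdd_below Q hQnn r) (Set.mem_image_of_mem _ hg)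

lemma kin_bound (Q : ℝ → ℝ) (hQ0 : Q 0 = 0) {R c : ℝ} (hR : 0 < R) (hc : 0 ≤ c) :
    ∃ g ∈ Gset Q (c * (R^3 * Vb)), kinQint Q g ≤ ((1/2)*R^2*c + Q c) * (R^3 * Vb) := by
  set B := Metric.closedBall (0:Space) R with hB
  refine ⟨B.indicator (fun _ => c), ⟨?_, ?_, ?_, ?_⟩, ?_⟩
  · exact fun v => Set.indicator_apply_nonneg fun _ => hc
  · rw [integrable_indicator_iff measurableSet_closedBall]
    exact integrableOn_const measure_closedBall_lt_top.ne
  case _ =>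
    have hfun : (fun v : Space => (1/2) * ‖v‖^2 * B.indicator (fun _ => c) v
        + Q (B.indicator (fun _ => c) v))
        = B.indicator (fun v => (1/2) * ‖v‖^2 * c + Q c) := by
      funext v
      by_cases hv : v ∈ B
      · simp [Set.indicator_of_mem hv]
      · simp [Set.indicator_of_notMem hv, hQ0]
    rw [hfun, integrable_indicator_iff measurableSet_closedBall]
    exact (Continuous.continuousOn (by continuity)).integrableOn_compact
      (isCompact_closedBall _ _)
  · rw [integral_indicator_const c measurableSet_closedBall, smul_eq_mul,
      measureReal_def, vol_cb hR.le, mul_comm]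
  · have hfun : (fun v : Space => (1/2) * ‖v‖^2 * B.indicator (fun _ => c) v
        + Q (B.indicator (fun _ => c) v))
        = B.indicator (fun v => (1/2) * ‖v‖^2 * c + Q c) := by
      funext v
      by_cases hv : v ∈ B
      · simp [Set.indicator_of_mem hv]
      · simp [Set.indicator_of_notMem hv, hQ0]
    rw [kinQint, hfun, integral_indicator measurableSet_closedBall]
    calc ∫ v in B, ((1/2) * ‖v‖^2 * c + Q c)
        ≤ ∫ _ in B, ((1/2) * R^2 * c + Q c) := by
          refine setIntegral_mono_on ?_ ?_ measurableSet_closedBall ?_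
          · exact (Continuous.continuousOn (by continuity)).integrableOn_compact
              (isCompact_closedBall _ _)
          · exact integrableOn_const measure_closedBall_lt_top.ne
          · intro v hv
            have hvR : ‖v‖ ≤ R := by
              simpa [hB, Metric.mem_closedBall, dist_zero_right] using hv
            have : ‖v‖^2 ≤ R^2 := by nlinarith [norm_nonneg v]
            nlinarith
      _ = ((1/2)*R^2*c + Q c) * (R^3 * Vb) := by
          rw [setIntegral_const, smul_eq_mul, measureReal_def, vol_cb hR.le, mul_comm]

lemma Q_nonneg {Q Q' : ℝ → ℝ} (hderiv : HasDerivWithinAt Q (Q' 0) (Set.Ici 0) 0)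
    (hconv : ConvexOn ℝ (Set.Ici 0) Q) (h0 : Q 0 = 0) (hd0 : Q' 0 = 0) :
    ∀ f, 0 ≤ f → 0 ≤ Q f := by
  intro f hf
  rcases hf.eq_or_lt with rfl | hf
  · exact le_of_eq h0.symm
  have hslope : Tendsto (slope Q 0) (𝓝[Set.Ici 0 \ {0}] 0) (𝓝 0) := by
    have := (hasDerivWithinAt_iff_tendsto_slope).1 hderiv
    rwa [hd0] at this
  have hIoi : Set.Ici (0:ℝ) \ {0} = Set.Ioi 0 := by
    ext x; simp [Set.mem_diff, lt_iff_le_and_ne, eq_comm]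
  rw [hIoi] at hslope
  have hev : ∀ᶠ s in 𝓝[>] (0:ℝ), slope Q 0 s ≤ Q f / f := by
    filter_upwards [Ioo_mem_nhdsGT_of_mem (Set.left_mem_Ico.2 hf)] with s hs
    have hs0 : 0 < s := hs.1
    have hsf : s < f := hs.2
    have key : Q s ≤ (s/f) * Q f := by
      have hb : (0:ℝ) ≤ s/f := by positivity
      have ha : (0:ℝ) ≤ 1 - s/f := by
        have h1 : s/f ≤ 1 := by rw [div_le_one hf]; exact hsf.le
        linarith
      have hab : (1 - s/f) + s/f = 1 := by ring
      have hcv := hconv.2 (Set.self_mem_Ici) (Set.mem_Ici.2 hf.le) ha hb hab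
      have hx : (1 - s/f) • (0:ℝ) + (s/f) • f = s := by
        simp [smul_eq_mul]
        field_simp
      rw [hx] at hcv
      simpa [h0] using hcv
    have key2 : Q s * f ≤ s * Q f := by
      rw [div_mul_eq_mul_div, le_div_iff₀ hf] at key
      linarith
    have hsl : slope Q 0 s = Q s / s := by simp [slope_def_field, h0]
    rw [hsl, div_le_div_iff₀ hs0 hf]
    nlinarith
  have hff : 0 ≤ Q f / f := le_of_tendsto hslope hev
  have h2 := mul_nonneg hff hf.le
  rwa [div_mul_cancel₀ _ hf.ne'] at h2

lemma key_bound (Q : ℝ → ℝ) (hQ0 : Q 0 = 0) (hQnn : ∀ f, 0 ≤ f → 0 ≤ Q f)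
    (k n : ℝ) (hk : 0 < k) (hn : n = k + 3/2) (C : ℝ) (hC : 0 < C)
    (ρ : ℝ) (hρ : 0 < ρ)
    (hQc : Q (ρ^(k/n)/Vb) ≤ C * (ρ^(k/n)/Vb)^(1 + 1/k)) :
    Phi Q ρ ≤ (1/2 + C * Vb^(-(1/k))) * ρ^(1 + 1/n) := by
  have hn0 : 0 < n := by rw [hn]; linarith
  set R : ℝ := ρ^(1/(2*n)) with hRdef
  set c : ℝ := ρ^(k/n)/Vb with hcdef
  have hR : 0 < R := rpow_pos_of_pos hρ _
  have hc : 0 < c := div_pos (rpow_pos_of_pos hρ _) Vb_pos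
  have hR3 : R^3 = ρ^(3/(2*n)) := by
    rw [hRdef, ← rpow_natCast (ρ^(1/(2*n))) 3, ← rpow_mul hρ.le]
    congr 1
    push_cast
    ring
  have hR2 : R^2 = ρ^(1/n) := by
    rw [hRdef, ← rpow_natCast (ρ^(1/(2*n))) 2, ← rpow_mul hρ.le]
    congr 1
    push_cast
    field_simp
  have hexp : k/n + 3/(2*n) = 1 := by
    field_simp
    nlinarith [hn]
  have hmass : c * (R^3 * Vb) = ρ := by
    have h1 : c * (R^3 * Vb) = ρ^(k/n) * ρ^(3/(2*n)) := by
      rw [hcdef, hR3]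
      field_simp [Vb_pos.ne']
    rw [h1, ← rpow_add hρ, hexp, rpow_one]
  obtain ⟨g, hg, hkin⟩ := kin_bound Q hQ0 hR hc.le
  rw [hmass] at hg
  refine (Phi_le_mem Q hQnn hg).trans (hkin.trans ?_)
  have hRV : 0 ≤ R^3 * Vb := mul_nonneg (by positivity) Vb_pos.le
  have step1 : ((1/2)*R^2*c + Q c) * (R^3 * Vb)
      ≤ ((1/2)*R^2*c + C * c^(1+1/k)) * (R^3 * Vb) := by
    apply mul_le_mul_of_nonneg_right _ hRV
    linarith [hQc]
  refine step1.trans (le_of_eq ?_)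
  have hcsplit : c^(1+1/k) = c * c^(1/k) := by
    rw [rpow_add hc, rpow_one]
  have hc1k : c^(1/k) = ρ^(1/n) * Vb^(-(1/k)) := by
    rw [hcdef, div_rpow (rpow_pos_of_pos hρ _).le Vb_pos.le, ← rpow_mul hρ.le,
      show k/n * (1/k) = 1/n by field_simp, rpow_neg Vb_pos.le, div_eq_mul_inv]
  have expand : ((1/2)*R^2*c + C * c^(1+1/k)) * (R^3 * Vb)
      = (1/2)*R^2*ρ + C * c^(1/k) * ρ := by
    rw [hcsplit, ← hmass]; ring
  rw [expand, hR2, hc1k, rpow_add hρ, rpow_one]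
  ring

lemma Phi_zero_le (Q : ℝ → ℝ) (hQ0 : Q 0 = 0) (hQnn : ∀ f, 0 ≤ f → 0 ≤ Q f) :
    Phi Q 0 ≤ 0 := by
  have hmem : (fun _ : Space => (0:ℝ)) ∈ Gset Q 0 := by
    refine ⟨fun v => le_refl 0, integrable_zero _ _ _, ?_, by simp⟩
    have h : (fun v : Space => (1/2) * ‖v‖^2 * (0:ℝ) + Q 0) = fun _ => (0:ℝ) := by
      funext v; simp [hQ0]
    rw [h]
    exact integrable_zero _ _ _
  have hval : kinQint Q (fun _ : Space => (0:ℝ)) = 0 := by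
    rw [kinQint]
    simp [hQ0]
  calc Phi Q 0 ≤ kinQint Q (fun _ : Space => (0:ℝ)) := Phi_le_mem Q hQnn hmem
    _ = 0 := hval

/-- If `Q(f) ≤ C f^{1+1/k}` for all small `f ≥ 0` (with `k > 0`, `C > 0`),
then `Φ(ρ) ≤ C' ρ^{1+1/n}` for all small `ρ ≥ 0`, where `n = k + 3/2`; if the bound on `Q`
holds for all `f ≥ 0`, then the bound on `Φ` holds for all `ρ ≥ 0`. -/
theorem Phi_upper_bound (Q Q' : ℝ → ℝ) (hQ : QHyp Q Q')
    (k n : ℝ) (hk : 0 < k) (hn : n = k + 3/2)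
    (C f₁ : ℝ) (hC : 0 < C) (hf₁ : 0 < f₁)
    (hQle : ∀ f : ℝ, 0 ≤ f → f ≤ f₁ → Q f ≤ C * f ^ (1 + 1/k)) :
    (∃ C' > (0:ℝ), ∃ ρ₁ > (0:ℝ), ∀ ρ : ℝ, 0 ≤ ρ → ρ ≤ ρ₁ → Phi Q ρ ≤ C' * ρ ^ (1 + 1/n)) ∧
    ((∀ f : ℝ, 0 ≤ f → Q f ≤ C * f ^ (1 + 1/k)) →
      ∃ C' > (0:ℝ), ∀ ρ : ℝ, 0 ≤ ρ → Phi Q ρ ≤ C' * ρ ^ (1 + 1/n)) := by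
  have hn0 : 0 < n := by rw [hn]; linarith
  have hQnn : ∀ f, 0 ≤ f → 0 ≤ Q f :=
    Q_nonneg (hQ.hasDeriv 0 Set.self_mem_Ici) hQ.strictConvex.convexOn hQ.zero hQ.derivZero
  set C' : ℝ := 1/2 + C * Vb^(-(1/k)) with hC'def
  have hC' : 0 < C' :=
    add_pos (by norm_num) (mul_pos hC (rpow_pos_of_pos Vb_pos _))
  have hzero : Phi Q 0 ≤ C' * (0:ℝ) ^ (1 + 1/n) := by
    rw [zero_rpow (by positivity : (1:ℝ) + 1/n ≠ 0), mul_zero]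
    exact Phi_zero_le Q hQ.zero hQnn
  constructor
  · refine ⟨C', hC', (f₁ * Vb)^(n/k), rpow_pos_of_pos (mul_pos hf₁ Vb_pos) _, ?_⟩
    intro ρ hρ0 hρ1
    rcases hρ0.eq_or_lt with rfl | hρ
    · exact hzero
    refine key_bound Q hQ.zero hQnn k n hk hn C hC ρ hρ ?_
    have hcnn : 0 ≤ ρ^(k/n)/Vb := div_nonneg (rpow_pos_of_pos hρ _).le Vb_pos.le
    refine hQle _ hcnn ?_
    rw [div_le_iff₀ Vb_pos]
    calc ρ^(k/n) ≤ ((f₁ * Vb)^(n/k))^(k/n) :=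
          rpow_le_rpow hρ.le hρ1 (div_nonneg hk.le hn0.le)
      _ = f₁ * Vb := by
          rw [← rpow_mul (mul_pos hf₁ Vb_pos).le,
            show n/k * (k/n) = 1 by field_simp, rpow_one]
  · intro hall
    refine ⟨C', hC', ?_⟩
    intro ρ hρ0
    rcases hρ0.eq_or_lt with rfl | hρ
    · exact hzero
    refine key_bound Q hQ.zero hQnn k n hk hn C hC ρ hρ ?_
    exact hall _ (div_nonneg (rpow_pos_of_pos hρ _).le Vb_pos.le)
end
end
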